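/- Let n ≥ 1. The map sending each subgroup H of the unit group (ℤ/nℤ)ˣ to the partition of ℤ/nℤ into orbits of H (acting by multiplication) is injective, and each such orbit partition is a Schur partition. Consequently, the number of automorphic Schur partitions of ℤ/nℤ equals the number of subgroups of (ℤ/nℤ)ˣ. -/

import Mathlib

open scoped Pointwise

noncomputable def classSum {G : Type*} [AddCommGroup G] (C : Set G) :
    AddMonoidAlgebra ℚ G :=
  ∑ᶠ g ∈ C, AddMonoidAlgebra.single g (1 : ℚ)

def IsSchurPartition {G : Type*} [AddCommGroup G] (P : Set (Set G)) : Prop :=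
  Setoid.IsPartition P ∧
  ({0} : Set G) ∈ P ∧
  (∀ C ∈ P, -C ∈ P) ∧
  ∀ C ∈ P, ∀ D ∈ P,
    classSum C * classSum D ∈ AddSubmonoid.closure (classSum '' P)

noncomputable def Omega (n : ℕ) : ℕ :=
  Nat.card {P : Set (Set (ZMod n)) // IsSchurPartition P}

section aux

variable {G : Type*} [AddCommGroup G] [Fintype G] [DecidableEq G]

lemma classSum_eq_sum (C : Set G) [DecidablePred (· ∈ C)] :
    classSum C = ∑ g ∈ C.toFinset, AddMonoidAlgebra.single g (1 : ℚ) := by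
  rw [classSum, ← finsum_mem_coe_finset, Set.coe_toFinset]

set_option linter.unusedSectionVars false

lemma classSum_eq_sum_ite (O : Set G) [DecidablePred (· ∈ O)] :
    classSum O = ∑ z : G, AddMonoidAlgebra.single z (if z ∈ O then (1:ℚ) else 0) := by
  rw [classSum_eq_sum]
  rw [show O.toFinset = Finset.univ.filter (· ∈ O) from by ext; simp, Finset.sum_filter]
  exact Finset.sum_congr rfl fun z _ => by split <;> simp

lemma mem_closure_of_const (P : Set (Set G)) (hP : Setoid.IsPartition P) :
    ∀ (N : ℕ) (g : G → ℕ), (∑ z : G, g z) = N →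
    (∀ O ∈ P, ∀ x ∈ O, ∀ y ∈ O, g x = g y) →
    (∑ z : G, AddMonoidAlgebra.single z (g z : ℚ)) ∈
      AddSubmonoid.closure (classSum '' P) := by
  intro N
  induction N using Nat.strong_induction_on with
  | _ N ih =>
    intro g hsum hconst
    by_cases h0 : ∀ z, g z = 0
    · have : (∑ z : G, AddMonoidAlgebra.single z (g z : ℚ)) = 0 := by simp [h0]
      rw [this]; exact zero_mem _
    push_neg at h0
    obtain ⟨z0, hz0⟩ := h0
    obtain ⟨O, ⟨hOP, hz0O⟩, huniq⟩ := hP.2 z0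
    haveI : DecidablePred (· ∈ O) := Classical.decPred _
    have hge : ∀ z ∈ O, 1 ≤ g z := fun z hz => by
      rw [hconst O hOP z hz z0 hz0O]; omega
    set g' : G → ℕ := fun z => g z - (if z ∈ O then 1 else 0) with hg'
    have hkey : ∀ z, g z = g' z + (if z ∈ O then 1 else 0) := by
      intro z
      by_cases hz : z ∈ O <;> simp [hg', hz]
      have := hge z hz; omega
    have hlt : (∑ z : G, g' z) < N := by
      rw [← hsum]
      apply Finset.sum_lt_sum (fun z _ => by rw [hkey z]; omega)
      exact ⟨z0, Finset.mem_univ _, by rw [hkey z0]; simp [hz0O]⟩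
    have hconst' : ∀ O' ∈ P, ∀ x ∈ O', ∀ y ∈ O', g' x = g' y := by
      intro O' hO'P x hx y hy
      have hiff : (x ∈ O) ↔ (y ∈ O) := by
        constructor
        · intro hxO
          obtain ⟨b, -, hu⟩ := hP.2 x
          have : O = O' := (hu O ⟨hOP, hxO⟩).trans (hu O' ⟨hO'P, hx⟩).symm
          exact this ▸ hy
        · intro hyO
          obtain ⟨b, -, hu⟩ := hP.2 y
          have : O = O' := (hu O ⟨hOP, hyO⟩).trans (hu O' ⟨hO'P, hy⟩).symm
          exact this ▸ hx
      simp only [hg', hconst O' hO'P x hx y hy, hiff]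
    have hsplit : (∑ z : G, AddMonoidAlgebra.single z (g z : ℚ)) =
        (∑ z : G, AddMonoidAlgebra.single z (g' z : ℚ)) + classSum O := by
      rw [classSum_eq_sum_ite O, ← Finset.sum_add_distrib]
      refine Finset.sum_congr rfl fun z _ => ?_
      rw [← AddMonoidAlgebra.single_add, hkey z]
      push_cast
      by_cases hz : z ∈ O <;> simp [hz]
    rw [hsplit]
    exact add_mem (ih _ hlt g' rfl hconst')
      (AddSubmonoid.subset_closure ⟨O, hOP, rfl⟩)


lemma classSum_mul_classSum (C D : Set G) [DecidablePred (· ∈ C)] [DecidablePred (· ∈ D)] :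
    classSum C * classSum D =
      ∑ z : G, AddMonoidAlgebra.single z
        ((((C.toFinset ×ˢ D.toFinset).filter fun p => p.1 + p.2 = z).card : ℚ)) := by
  rw [classSum_eq_sum, classSum_eq_sum, Finset.sum_mul_sum]
  simp_rw [AddMonoidAlgebra.single_mul_single, one_mul]
  rw [← Finset.sum_product']
  rw [← Finset.sum_fiberwise (C.toFinset ×ˢ D.toFinset) (fun p => p.1 + p.2)
    (fun p => AddMonoidAlgebra.single (p.1 + p.2) (1:ℚ))]
  refine Finset.sum_congr rfl fun z _ => ?_
  rw [Finset.sum_congr rfl (fun p hp => by rw [(Finset.mem_filter.mp hp).2]),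
    Finset.sum_const]
  rw [show ∀ (c : ℕ) (v : AddMonoidAlgebra ℚ G), c • v = (c : ℚ) • v from
    fun c v => by rw [Nat.cast_smul_eq_nsmul ℚ], AddMonoidAlgebra.smul_single']
  rw [mul_one]

end aux

/-- The partition of `ℤ/nℤ` into orbits of the subgroup `H ≤ (ℤ/nℤ)ˣ` acting by
multiplication. -/
def orbitPartition (n : ℕ) (H : Subgroup (ZMod n)ˣ) : Set (Set (ZMod n)) :=
  {C : Set (ZMod n) | ∃ a : ZMod n, C = {x : ZMod n | ∃ u ∈ H, (u : ZMod n) * a = x}}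

section zmod

variable {n : ℕ} {H : Subgroup (ZMod n)ˣ}

lemma exists_unit_of_same_orbit {C : Set (ZMod n)} (hC : C ∈ orbitPartition n H)
    {x y : ZMod n} (hx : x ∈ C) (hy : y ∈ C) : ∃ w ∈ H, (w : ZMod n) * x = y := by
  obtain ⟨c, rfl⟩ := hC
  obtain ⟨u, hu, hux⟩ := hx
  obtain ⟨v, hv, hvy⟩ := hy
  refine ⟨v * u⁻¹, mul_mem hv (inv_mem hu), ?_⟩
  rw [← hux, ← hvy, Units.val_mul, mul_assoc, ← mul_assoc (↑u⁻¹ : ZMod n),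
    Units.inv_mul, one_mul]

lemma orbP_invariant {C : Set (ZMod n)} (hC : C ∈ orbitPartition n H)
    {w : (ZMod n)ˣ} (hw : w ∈ H) {x : ZMod n} (hx : x ∈ C) : (w : ZMod n) * x ∈ C := by
  obtain ⟨c, rfl⟩ := hC
  obtain ⟨u, hu, hux⟩ := hx
  exact ⟨w * u, mul_mem hw hu, by rw [← hux, Units.val_mul, mul_assoc]⟩

lemma orbP_isPartition (H : Subgroup (ZMod n)ˣ) :
    Setoid.IsPartition (orbitPartition n H) := by
  constructor
  · rintro ⟨a, ha⟩
    exact absurd (ha ▸ ⟨1, H.one_mem, one_mul a⟩ : a ∈ (∅ : Set (ZMod n))) (Set.notMem_empty a)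
  · intro x
    refine ⟨{y | ∃ u ∈ H, (u : ZMod n) * x = y}, ⟨⟨x, rfl⟩, ⟨1, H.one_mem, one_mul x⟩⟩, ?_⟩
    rintro O ⟨hO, hxO⟩
    obtain ⟨a, rfl⟩ := hO
    obtain ⟨u, hu, hux⟩ := hxO
    ext y
    constructor
    · rintro ⟨v, hv, rfl⟩
      exact ⟨v * u⁻¹, mul_mem hv (inv_mem hu), by
        rw [← hux, Units.val_mul, mul_assoc, ← mul_assoc (↑u⁻¹ : ZMod n),
          Units.inv_mul, one_mul]⟩
    · rintro ⟨v, hv, rfl⟩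
      exact ⟨v * u, mul_mem hv hu, by rw [← hux, Units.val_mul, mul_assoc]⟩

end zmod

/-- The map `H ↦ orbit partition of H` is injective, each orbit partition is a Schur
partition, and so the number of automorphic Schur partitions of `ℤ/nℤ` equals the number
of subgroups of `(ℤ/nℤ)ˣ`. -/
theorem automorphic_schur_count (n : ℕ) (hn : 0 < n) :
    Function.Injective (orbitPartition n) ∧
    (∀ H : Subgroup (ZMod n)ˣ, IsSchurPartition (orbitPartition n H)) ∧
    Nat.card {P : Set (Set (ZMod n)) // ∃ H : Subgroup (ZMod n)ˣ, P = orbitPartition n H} =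
      Nat.card (Subgroup (ZMod n)ˣ) := by
  haveI : NeZero n := ⟨hn.ne'⟩
  classical
  have hinj : Function.Injective (orbitPartition n) := by
    intro H K hHK
    have h1 : {x : ZMod n | ∃ u ∈ H, (u : ZMod n) * 1 = x} ∈ orbitPartition n K :=
      hHK ▸ ⟨1, rfl⟩
    obtain ⟨a, ha⟩ := h1
    have h1m : (1 : ZMod n) ∈ {x : ZMod n | ∃ u ∈ K, (u : ZMod n) * a = x} :=
      ha ▸ ⟨1, H.one_mem, one_mul 1⟩
    have hKa : {x : ZMod n | ∃ u ∈ K, (u : ZMod n) * a = x} =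
        {x : ZMod n | ∃ u ∈ K, (u : ZMod n) * 1 = x} := by
      have := (orbP_isPartition K).2 1
      obtain ⟨b, -, hu⟩ := this
      exact (hu _ ⟨⟨a, rfl⟩, h1m⟩).trans (hu _ ⟨⟨1, rfl⟩, ⟨1, K.one_mem, one_mul 1⟩⟩).symm
    have hset : {x : ZMod n | ∃ u ∈ H, (u : ZMod n) * 1 = x} =
        {x : ZMod n | ∃ u ∈ K, (u : ZMod n) * 1 = x} := ha.trans hKa
    ext u
    constructor
    · intro hu
      obtain ⟨v, hv, hvu⟩ := (Set.ext_iff.mp hset (↑u)).mp ⟨u, hu, mul_one _⟩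
      rw [mul_one] at hvu
      exact Units.ext hvu ▸ hv
    · intro hu
      obtain ⟨v, hv, hvu⟩ := (Set.ext_iff.mp hset (↑u)).mpr ⟨u, hu, mul_one _⟩
      rw [mul_one] at hvu
      exact Units.ext hvu ▸ hv
  refine ⟨hinj, ?_, ?_⟩
  · intro H
    refine ⟨orbP_isPartition H, ?_, ?_, ?_⟩
    · refine ⟨0, ?_⟩
      ext x
      simp only [Set.mem_singleton_iff, Set.mem_setOf_eq]
      constructor
      · rintro rfl; exact ⟨1, H.one_mem, mul_zero _⟩
      · rintro ⟨u, -, rfl⟩; exact mul_zero _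
    · rintro C ⟨a, rfl⟩
      refine ⟨-a, ?_⟩
      ext x
      simp only [Set.mem_neg, Set.mem_setOf_eq]
      constructor
      · rintro ⟨u, hu, hux⟩
        exact ⟨u, hu, by rw [mul_neg, hux, neg_neg]⟩
      · rintro ⟨u, hu, rfl⟩
        exact ⟨u, hu, by rw [mul_neg, neg_neg]⟩
    · intro C hC D hD
      have hCD : ∀ (w : (ZMod n)ˣ), w ∈ H → ∀ z : ZMod n,
          (((C.toFinset ×ˢ D.toFinset).filter fun p => p.1 + p.2 = z).card) =
          (((C.toFinset ×ˢ D.toFinset).filter fun p => p.1 + p.2 = (w : ZMod n) * z).card) := by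
        intro w hw z
        refine Finset.card_bij'
          (fun p _ => ((w : ZMod n) * p.1, (w : ZMod n) * p.2))
          (fun p _ => ((↑w⁻¹ : ZMod n) * p.1, (↑w⁻¹ : ZMod n) * p.2)) ?_ ?_ ?_ ?_
        · rintro ⟨x, y⟩ hp
          simp only [Finset.mem_filter, Finset.mem_product, Set.mem_toFinset] at hp ⊢
          obtain ⟨⟨hx, hy⟩, hs⟩ := hp
          exact ⟨⟨orbP_invariant hC hw hx, orbP_invariant hD hw hy⟩,
            by rw [← mul_add, hs]⟩
        · rintro ⟨x, y⟩ hp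
          simp only [Finset.mem_filter, Finset.mem_product, Set.mem_toFinset] at hp ⊢
          obtain ⟨⟨hx, hy⟩, hs⟩ := hp
          refine ⟨⟨orbP_invariant hC (inv_mem hw) hx, orbP_invariant hD (inv_mem hw) hy⟩, ?_⟩
          rw [← mul_add, hs, ← mul_assoc, Units.inv_mul, one_mul]
        · rintro ⟨x, y⟩ _
          simp only [Prod.mk.injEq]
          constructor <;> rw [← mul_assoc, Units.inv_mul, one_mul]
        · rintro ⟨x, y⟩ _
          simp only [Prod.mk.injEq]
          constructor <;> rw [← mul_assoc, Units.mul_inv, one_mul]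
      rw [classSum_mul_classSum]
      refine mem_closure_of_const _ (orbP_isPartition H) _ _ rfl ?_
      intro O hO x hx y hy
      obtain ⟨w, hw, rfl⟩ := exists_unit_of_same_orbit hO hx hy
      exact hCD w hw x
  · have hbij : Function.Bijective
        (fun H : Subgroup (ZMod n)ˣ =>
          (⟨orbitPartition n H, ⟨H, rfl⟩⟩ :
            {P : Set (Set (ZMod n)) // ∃ K : Subgroup (ZMod n)ˣ, P = orbitPartition n K})) := by
      constructor
      · intro H K h
        exact hinj (congrArg Subtype.val h)
      · rintro ⟨P, K, rfl⟩
        exact ⟨K, rfl⟩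
    exact (Nat.card_congr (Equiv.ofBijective _ hbij)).symm
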